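/- Suppose X₀ is a strictly feasible (i.e., positive definite feasible) point of the SDP inf{A₀ • X : A_k • X = b_k (k=1,…,m), X ∈ S^n_+}. If for each t ∈ [0, δ] the perturbed feasibility system A_k(t) • X = b_k(t), X ∈ S^n_+ is feasible and rank⟨A₁(t),…,A_m(t)⟩ = rank⟨A₁,…,A_m⟩, then there exist strictly feasible points X_t of the perturbed problems with X_t → X₀ as t → 0. -/

import Mathlib

open Matrix Set Filter Topology

noncomputable section

abbrev Mat (n : ℕ) := Matrix (Fin n) (Fin n) ℝ

def ip {n : ℕ} (A B : Mat n) : ℝ := ∑ i, ∑ j, A i j * B i j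

namespace SDPAux

variable {n : ℕ}

lemma ip_smul_left (a : ℝ) (A X : Mat n) : ip (a • A) X = a * ip A X := by
  simp [ip, Finset.mul_sum, mul_assoc]

lemma ip_add_left (A B X : Mat n) : ip (A + B) X = ip A X + ip B X := by
  simp [ip, add_mul, Finset.sum_add_distrib]

lemma ip_sum_left {ι : Type*} (s : Finset ι) (f : ι → Mat n) (X : Mat n) :
    ip (∑ i ∈ s, f i) X = ∑ i ∈ s, ip (f i) X := by
  classical
  induction s using Finset.induction_on with
  | empty => simp [ip]
  | insert _ _ h ih => rw [Finset.sum_insert h, ip_add_left, ih, Finset.sum_insert h]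

lemma ip_comm (A B : Mat n) : ip A B = ip B A := by
  simp [ip, mul_comm]

lemma ip_add_right (A X Y : Mat n) : ip A (X + Y) = ip A X + ip A Y := by
  rw [ip_comm, ip_add_left, ip_comm X A, ip_comm Y A]

lemma ip_smul_right (a : ℝ) (A X : Mat n) : ip A (a • X) = a * ip A X := by
  rw [ip_comm, ip_smul_left, ip_comm]

lemma ip_sum_right {ι : Type*} (s : Finset ι) (A : Mat n) (f : ι → Mat n) :
    ip A (∑ i ∈ s, f i) = ∑ i ∈ s, ip A (f i) := by
  rw [ip_comm, ip_sum_left]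
  exact Finset.sum_congr rfl fun i _ => ip_comm _ _

lemma ip_self_eq_zero {W : Mat n} (h : ip W W = 0) : W = 0 := by
  have h2 : ∀ i ∈ (Finset.univ : Finset (Fin n)), ∀ j ∈ (Finset.univ : Finset (Fin n)),
      W i j * W i j = 0 := by
    have hnn : ∀ i ∈ (Finset.univ : Finset (Fin n)),
        0 ≤ ∑ j, W i j * W i j := fun i _ =>
      Finset.sum_nonneg fun j _ => mul_self_nonneg _
    have h1 := (Finset.sum_eq_zero_iff_of_nonneg hnn).mp h
    intro i hi j hj
    exact (Finset.sum_eq_zero_iff_of_nonneg (fun j _ => mul_self_nonneg _)).mp (h1 i hi) j hj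
  ext i j
  have := h2 i (Finset.mem_univ i) j (Finset.mem_univ j)
  simpa [mul_self_eq_zero] using this

/-- quadratic form lower bound for a positive definite matrix -/
lemma posdef_lower_bound (M : Mat n) (hM : M.PosDef) :
    ∃ c > 0, ∀ x : Fin n → ℝ, c * ∑ i, x i ^ 2 ≤ x ⬝ᵥ M *ᵥ x := by
  rcases Nat.eq_zero_or_pos n with hn | hn
  · refine ⟨1, one_pos, fun x => ?_⟩
    subst hn
    simp [dotProduct]
  · set q : (Fin n → ℝ) → ℝ := fun x => ∑ i, x i ^ 2 with hq
    set f : (Fin n → ℝ) → ℝ := fun x => x ⬝ᵥ M *ᵥ x with hf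
    have hqc : Continuous q := by
      apply continuous_finset_sum
      intro i _
      exact (continuous_apply i).pow 2
    have hfc : Continuous f := by
      apply (continuous_id.dotProduct ?_)
      exact (continuous_const : Continuous fun _ : Fin n → ℝ => M).matrix_mulVec continuous_id
    set S : Set (Fin n → ℝ) := {x | q x = 1} with hS
    have hSc : IsClosed S := isClosed_eq hqc continuous_const
    have hSb : Bornology.IsBounded S := by
      apply (Metric.isBounded_iff_subset_closedBall 0).mpr
      refine ⟨1, fun x hx => ?_⟩
      simp only [Metric.mem_closedBall, dist_zero_right]
      rw [pi_norm_le_iff_of_nonneg zero_le_one]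
      intro i
      rw [Real.norm_eq_abs, abs_le]
      have h1 : x i ^ 2 ≤ 1 := by
        have := Finset.single_le_sum (f := fun j => x j ^ 2)
          (fun j _ => sq_nonneg _) (Finset.mem_univ i)
        calc x i ^ 2 ≤ q x := this
        _ = 1 := hx
      constructor <;> nlinarith [sq_nonneg (x i - 1), sq_nonneg (x i + 1)]
    have hScomp : IsCompact S := Metric.isCompact_of_isClosed_isBounded hSc hSb
    have hSne : S.Nonempty := by
      refine ⟨Pi.single ⟨0, hn⟩ 1, ?_⟩
      simp only [hS, mem_setOf_eq, hq]
      rw [Finset.sum_eq_single ⟨0, hn⟩]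
      · simp
      · intro j _ hj; simp [Pi.single_eq_of_ne hj]
      · simp
    obtain ⟨x₀, hx₀S, hx₀min⟩ := hScomp.exists_isMinOn hSne hfc.continuousOn
    have hx₀ne : x₀ ≠ 0 := by
      intro h
      rw [h] at hx₀S
      simp [hS, hq] at hx₀S
    have hc : 0 < f x₀ := by
      have := hM.dotProduct_mulVec_pos hx₀ne
      simpa [hf, star_trivial] using this
    refine ⟨f x₀, hc, fun x => ?_⟩
    by_cases hx : x = 0
    · simp [hx, hq, hf, dotProduct]
    · have hqx : 0 < q x := by
        obtain ⟨i, hi⟩ := Function.ne_iff.mp hx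
        have h1 : 0 < x i ^ 2 := (sq_nonneg _).lt_of_ne (Ne.symm (pow_ne_zero 2 hi))
        have h2 := Finset.single_le_sum (f := fun j => x j ^ 2)
          (fun j _ => sq_nonneg _) (Finset.mem_univ i)
        exact lt_of_lt_of_le h1 h2
      set a : ℝ := (Real.sqrt (q x))⁻¹ with ha
      have hsq : Real.sqrt (q x) > 0 := Real.sqrt_pos.mpr hqx
      have ha2 : a ^ 2 * q x = 1 := by
        rw [ha, inv_pow, Real.sq_sqrt hqx.le, inv_mul_cancel₀ hqx.ne']
      have hmem : a • x ∈ S := by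
        simp only [hS, mem_setOf_eq, hq, Pi.smul_apply, smul_eq_mul, mul_pow]
        rw [← Finset.mul_sum]
        simpa [hq] using ha2
      have hfax : f (a • x) = a ^ 2 * f x := by
        simp only [hf, Matrix.mulVec_smul, smul_dotProduct, dotProduct_smul,
          smul_eq_mul]
        ring
      have h3 : f x₀ ≤ f (a • x) := hx₀min hmem
      rw [hfax] at h3
      have haq : a ^ 2 = (q x)⁻¹ := by
        field_simp at ha2 ⊢
        linarith [ha2]
      rw [haq, inv_mul_eq_div, le_div_iff₀ hqx] at h3
      exact h3

end SDPAux
/-- If `X₀` is a strictly feasible point of the dual SDP, the perturbed systems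
`A_k(t) • X = b_k(t), X ∈ S^n_+` are feasible on `[0, δ]`, and the rank of the span
of `A₁(t), …, A_m(t)` is constant, then there exist strictly feasible points `X_t`
of the perturbed problems with `X_t → X₀` as `t → 0`. -/
theorem perturbed_strictly_feasible_points_exist (n m : ℕ) (δ : ℝ) (hδ : 0 < δ)
    (A : Fin m → ℝ → Mat n) (b : ℝ → Fin m → ℝ)
    (hAsymm : ∀ k t, (A k t).IsSymm)
    (hAcont : ∀ k, Tendsto (A k) (nhdsWithin 0 (Icc 0 δ)) (nhds (A k 0)))
    (hbcont : Tendsto b (nhdsWithin 0 (Icc 0 δ)) (nhds (b 0)))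
    (X₀ : Mat n) (hX₀pd : X₀.PosDef) (hX₀feas : ∀ k, ip (A k 0) X₀ = b 0 k)
    (hfeas : ∀ t ∈ Icc (0:ℝ) δ, ∃ X : Mat n, X.PosSemidef ∧ ∀ k, ip (A k t) X = b t k)
    (hrank : ∀ t ∈ Icc (0:ℝ) δ,
      Module.finrank ℝ ↥(Submodule.span ℝ (Set.range fun k => A k t)) =
        Module.finrank ℝ ↥(Submodule.span ℝ (Set.range fun k => A k 0))) :
    ∃ δ' : ℝ, 0 < δ' ∧ δ' ≤ δ ∧ ∃ X : ℝ → Mat n,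
      (∀ t ∈ Icc (0:ℝ) δ', (X t).PosDef ∧ ∀ k, ip (A k t) (X t) = b t k) ∧
      Tendsto X (nhdsWithin 0 (Icc 0 δ')) (nhds X₀) := by
  classical
  set l := nhdsWithin (0:ℝ) (Icc 0 δ) with hl
  obtain ⟨bs, hbsub, hbspan, hbind⟩ :=
    exists_linearIndependent ℝ (Set.range fun k => A k 0)
  haveI : Fintype bs := hbind.setFinite.fintype
  have hchoice : ∀ i : bs, ∃ k, A k 0 = (i : Mat n) := fun i => hbsub i.2
  set σ : bs → Fin m := fun i => (hchoice i).choose with hσdef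
  have hσ : ∀ i : bs, A (σ i) 0 = (i : Mat n) := fun i => (hchoice i).choose_spec
  set F : ℝ → bs → Mat n := fun t i => A (σ i) t with hFdef
  set G : ℝ → Matrix bs bs ℝ := fun t => Matrix.of fun i j => ip (F t i) (F t j) with hGdef
  set cv : ℝ → bs → ℝ := fun t i => b t (σ i) - ip (F t i) X₀ with hcdef
  set lam : ℝ → bs → ℝ := fun t => (G t).det⁻¹ • ((G t).adjugate *ᵥ cv t) with hlamdef
  set Z : ℝ → Mat n := fun t => ∑ j, lam t j • F t j with hZdef
  set Xf : ℝ → Mat n := fun t => X₀ + Z t with hXfdef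
  have hF0 : F 0 = fun i : bs => (i : Mat n) := funext hσ
  have hind0 : LinearIndependent ℝ (F 0) := by rw [hF0]; exact hbind
  have hGapp : ∀ t (i j : bs), G t i j = ip (F t i) (F t j) := fun t i j => rfl
  -- det (G 0) ≠ 0
  have hGram_mv : ∀ t (v : bs → ℝ), ∀ i, ip (F t i) (∑ j, v j • F t j) = (G t *ᵥ v) i := by
    intro t v i
    rw [SDPAux.ip_sum_right]
    simp only [SDPAux.ip_smul_right]
    simp [Matrix.mulVec, dotProduct, hGapp, mul_comm]
  have hdet0 : (G 0).det ≠ 0 := by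
    intro h
    obtain ⟨v, hv, hmv⟩ := (Matrix.exists_mulVec_eq_zero_iff).mpr h
    set w := ∑ j, v j • F 0 j with hw
    have hww : ip w w = 0 := by
      rw [hw, SDPAux.ip_sum_left]
      have : ∀ j : bs, ip (v j • F 0 j) w = v j * ip (F 0 j) w :=
        fun j => SDPAux.ip_smul_left _ _ _
      rw [Finset.sum_congr rfl fun j _ => this j]
      have hz : ∀ j : bs, ip (F 0 j) w = 0 := by
        intro j
        rw [hw, hGram_mv 0 v j, hmv]
        rfl
      simp [hz]
    have hw0 : w = 0 := SDPAux.ip_self_eq_zero hww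
    have := Fintype.linearIndependent_iff.mp hind0 v (by rw [← hw, hw0]) 
    exact hv (funext this)
  -- Tendsto facts
  have hbk : ∀ k, Tendsto (fun t => b t k) l (nhds (b 0 k)) :=
    fun k => tendsto_pi_nhds.mp hbcont k
  have hFe : ∀ (i : bs) (p q : Fin n), Tendsto (fun t => F t i p q) l (nhds (F 0 i p q)) :=
    fun i p q => tendsto_pi_nhds.mp (tendsto_pi_nhds.mp (hAcont (σ i)) p) q
  have hipF : ∀ i j : bs, Tendsto (fun t => ip (F t i) (F t j)) l (nhds (ip (F 0 i) (F 0 j))) := by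
    intro i j
    simp only [ip]
    exact tendsto_finset_sum _ fun p _ =>
      tendsto_finset_sum _ fun q _ => (hFe i p q).mul (hFe j p q)
  have hG : Tendsto G l (nhds (G 0)) := by
    refine tendsto_pi_nhds.mpr fun i => tendsto_pi_nhds.mpr fun j => ?_
    exact hipF i j
  have hdet : Tendsto (fun t => (G t).det) l (nhds ((G 0).det)) :=
    ((continuous_id.matrix_det).tendsto (G 0)).comp hG
  have hadj : Tendsto (fun t => (G t).adjugate) l (nhds ((G 0).adjugate)) :=
    ((continuous_id.matrix_adjugate).tendsto (G 0)).comp hG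
  have hipFX₀ : ∀ i : bs, Tendsto (fun t => ip (F t i) X₀) l (nhds (ip (F 0 i) X₀)) := by
    intro i
    simp only [ip]
    exact tendsto_finset_sum _ fun p _ =>
      tendsto_finset_sum _ fun q _ => (hFe i p q).mul tendsto_const_nhds
  have hcv : ∀ i : bs, Tendsto (fun t => cv t i) l (nhds (cv 0 i)) :=
    fun i => (hbk (σ i)).sub (hipFX₀ i)
  have hcv0 : ∀ i : bs, cv 0 i = 0 := by
    intro i
    simp only [hcdef, hFdef]
    rw [hX₀feas (σ i)]
    ring
  have hlamt : ∀ j : bs, Tendsto (fun t => lam t j) l (nhds 0) := by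
    intro j
    have h1 : Tendsto (fun t => (G t).det⁻¹) l (nhds ((G 0).det⁻¹)) := hdet.inv₀ hdet0
    have h2 : ∀ i : bs, Tendsto (fun t => (G t).adjugate j i) l (nhds ((G 0).adjugate j i)) :=
      fun i => tendsto_pi_nhds.mp (tendsto_pi_nhds.mp hadj j) i
    have h3 : Tendsto (fun t => lam t j)
        l (nhds ((G 0).det⁻¹ * ∑ i, (G 0).adjugate j i * cv 0 i)) := by
      simp only [hlamdef, Pi.smul_apply, smul_eq_mul, Matrix.mulVec, dotProduct]
      exact h1.mul (tendsto_finset_sum _ fun i _ => (h2 i).mul (hcv i))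
    have : ((G 0).det⁻¹ * ∑ i, (G 0).adjugate j i * cv 0 i) = 0 := by
      simp [hcv0]
    rwa [this] at h3
  have hZe : ∀ t (p q : Fin n), Z t p q = ∑ j, lam t j * F t j p q := by
    intro t p q
    simp [hZdef, Matrix.sum_apply]
  have hZ : Tendsto Z l (nhds 0) := by
    refine tendsto_pi_nhds.mpr fun p => tendsto_pi_nhds.mpr fun q => ?_
    simp only [hZe, Matrix.zero_apply]
    have : Tendsto (fun t => ∑ j, lam t j * F t j p q) l
        (nhds (∑ j : bs, 0 * F 0 j p q)) :=
      tendsto_finset_sum _ fun j _ => (hlamt j).mul (hFe j p q)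
    simpa using this
  -- lower bound for X₀
  obtain ⟨cq, hcq, hquad⟩ := SDPAux.posdef_lower_bound X₀ hX₀pd
  set ε : ℝ := cq / (4 * (n + 1)) with hεdef
  have hεpos : 0 < ε := by positivity
  -- eventually facts
  have hev1 : ∀ᶠ t in l, (G t).det ≠ 0 := hdet.eventually_ne hdet0
  have hev2 : ∀ᶠ t in l, ∀ p q : Fin n, |Z t p q| < ε := by
    rw [eventually_all]
    intro p
    rw [eventually_all]
    intro q
    have hZpq : Tendsto (fun t => Z t p q) l (nhds 0) :=
      tendsto_pi_nhds.mp (tendsto_pi_nhds.mp hZ p) q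
    have := Metric.tendsto_nhds.mp hZpq ε hεpos
    simpa [Real.dist_eq] using this
  have hev := hev1.and hev2
  rw [hl, eventually_nhdsWithin_iff, Metric.eventually_nhds_iff] at hev
  obtain ⟨ε', hε', hball⟩ := hev
  have hδ'pos : 0 < min δ (ε' / 2) := lt_min hδ (by positivity)
  refine ⟨min δ (ε' / 2), hδ'pos, min_le_left _ _, Xf, ?_, ?_⟩
  · intro t ht
    have htδ : t ∈ Icc (0:ℝ) δ := ⟨ht.1, le_trans ht.2 (min_le_left _ _)⟩
    have hdist : dist t 0 < ε' := by
      rw [Real.dist_eq, sub_zero, abs_of_nonneg ht.1]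
      have h1 : t ≤ ε' / 2 := le_trans ht.2 (min_le_right _ _)
      linarith
    obtain ⟨hdetne, hZsmall⟩ := hball hdist htδ
    -- Gram solve
    have hGmul : G t *ᵥ lam t = cv t := by
      rw [hlamdef]
      rw [Matrix.mulVec_smul, Matrix.mulVec_mulVec, Matrix.mul_adjugate,
        Matrix.smul_mulVec, Matrix.one_mulVec, smul_smul,
        inv_mul_cancel₀ hdetne, one_smul]
    have hipFZ : ∀ i : bs, ip (F t i) (Z t) = cv t i := by
      intro i
      rw [hZdef, hGram_mv t (lam t) i, hGmul]
    have hipFXf : ∀ i : bs, ip (F t i) (Xf t) = b t (σ i) := by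
      intro i
      rw [hXfdef, SDPAux.ip_add_right, hipFZ]
      simp [hcdef]
    -- linear independence of F t
    have hindt : LinearIndependent ℝ (F t) := by
      rw [Fintype.linearIndependent_iff]
      intro g hg
      have hGv : G t *ᵥ g = 0 := by
        funext i
        rw [← hGram_mv t g i, hg]
        simp [ip]
      have h3 : (G t).det • g = 0 := by
        have h4 := congrArg (fun v => (G t).adjugate *ᵥ v) hGv
        rwa [Matrix.mulVec_mulVec, Matrix.adjugate_mul, Matrix.smul_mulVec,
          Matrix.one_mulVec, Matrix.mulVec_zero] at h4
      have hg0 : g = 0 := (smul_eq_zero.mp h3).resolve_left hdetne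
      intro i
      rw [hg0]
      rfl
    -- spans
    have hspan0 : Submodule.span ℝ (Set.range (F 0)) =
        Submodule.span ℝ (Set.range fun k => A k 0) := by
      rw [hF0, Subtype.range_coe]
      exact hbspan
    have hcard0 : Module.finrank ℝ (Submodule.span ℝ (Set.range fun k => A k 0)) =
        Fintype.card bs := by
      rw [← hspan0, finrank_span_eq_card hind0]
    have hspant : Submodule.span ℝ (Set.range (F t)) =
        Submodule.span ℝ (Set.range fun k => A k t) := by
      apply Submodule.eq_of_le_of_finrank_le
      · rw [Submodule.span_le]
        rintro x ⟨i, rfl⟩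
        exact Submodule.subset_span ⟨σ i, rfl⟩
      · rw [finrank_span_eq_card hindt, hrank t htδ, hcard0]
    -- feasibility
    obtain ⟨W, hWpsd, hWfeas⟩ := hfeas t htδ
    have hfeask : ∀ k, ip (A k t) (Xf t) = b t k := by
      intro k
      have hmem : A k t ∈ Submodule.span ℝ (Set.range (F t)) := by
        rw [hspant]
        exact Submodule.subset_span ⟨k, rfl⟩
      obtain ⟨μ, hμ⟩ := (Submodule.mem_span_range_iff_exists_fun ℝ).mp hmem
      have hexp : ∀ Y, ip (A k t) Y = ∑ i, μ i * ip (F t i) Y := by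
        intro Y
        rw [← hμ, SDPAux.ip_sum_left]
        exact Finset.sum_congr rfl fun i _ => SDPAux.ip_smul_left _ _ _
      rw [hexp (Xf t)]
      calc ∑ i, μ i * ip (F t i) (Xf t) = ∑ i, μ i * ip (F t i) W := by
            refine Finset.sum_congr rfl fun i _ => ?_
            rw [hipFXf i, hWfeas (σ i)]
        _ = ip (A k t) W := (hexp W).symm
        _ = b t k := hWfeas k
    -- positive definiteness
    have hZsymm : ∀ p q : Fin n, Z t q p = Z t p q := by
      intro p q
      rw [hZe, hZe]
      refine Finset.sum_congr rfl fun j _ => ?_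
      simp only [hFdef]
      rw [(hAsymm (σ j) t).apply p q]
    have hherm : (Xf t).IsHermitian := by
      rw [Matrix.IsHermitian]
      ext p q
      simp only [Matrix.conjTranspose_apply, hXfdef, Matrix.add_apply, star_trivial]
      have hX0 : X₀ q p = X₀ p q := by
        have := hX₀pd.1.apply p q
        simpa using this
      rw [hX0, hZsymm p q]
    have hquadZ : ∀ x : Fin n → ℝ,
        |x ⬝ᵥ Z t *ᵥ x| ≤ ε * (2 * n * ∑ i, x i ^ 2) := by
      intro x
      have h1 : x ⬝ᵥ Z t *ᵥ x = ∑ p, ∑ q, x p * (Z t p q * x q) := by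
        simp [dotProduct, Matrix.mulVec, Finset.mul_sum]
      have h2 : |x ⬝ᵥ Z t *ᵥ x| ≤ ∑ p, ∑ q, |x p| * (|Z t p q| * |x q|) := by
        rw [h1]
        refine le_trans (Finset.abs_sum_le_sum_abs _ _) ?_
        refine Finset.sum_le_sum fun p _ => ?_
        refine le_trans (Finset.abs_sum_le_sum_abs _ _) ?_
        refine Finset.sum_le_sum fun q _ => ?_
        rw [abs_mul, abs_mul]
      have h3 : ∀ p q : Fin n, |x p| * (|Z t p q| * |x q|) ≤ ε * (x p ^ 2 + x q ^ 2) := by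
        intro p q
        have hz := le_of_lt (hZsmall p q)
        have hstep : |x p| * (|Z t p q| * |x q|) ≤ |x p| * (ε * |x q|) :=
          mul_le_mul_of_nonneg_left
            (mul_le_mul_of_nonneg_right hz (abs_nonneg _)) (abs_nonneg _)
        refine hstep.trans ?_
        have habs : |x p| * |x q| ≤ x p ^ 2 + x q ^ 2 := by
          nlinarith [sq_nonneg (|x p| - |x q|), sq_abs (x p), sq_abs (x q),
            abs_nonneg (x p), abs_nonneg (x q), mul_nonneg (abs_nonneg (x p)) (abs_nonneg (x q))]
        calc |x p| * (ε * |x q|) = ε * (|x p| * |x q|) := by ring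
          _ ≤ ε * (x p ^ 2 + x q ^ 2) := mul_le_mul_of_nonneg_left habs hεpos.le
      have h4 : ∑ p, ∑ q : Fin n, ε * (x p ^ 2 + x q ^ 2) = ε * (2 * n * ∑ i, x i ^ 2) := by
        have hrow : ∀ p : Fin n, ∑ q : Fin n, ε * (x p ^ 2 + x q ^ 2)
            = ε * (n * x p ^ 2 + ∑ i, x i ^ 2) := by
          intro p
          rw [← Finset.mul_sum]
          congr 1
          rw [Finset.sum_add_distrib, Finset.sum_const, Finset.card_univ, Fintype.card_fin,
            nsmul_eq_mul]
        rw [Finset.sum_congr rfl fun p _ => hrow p, ← Finset.mul_sum]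
        congr 1
        rw [Finset.sum_add_distrib, Finset.sum_const, Finset.card_univ, Fintype.card_fin,
          nsmul_eq_mul]
        rw [← Finset.mul_sum]
        ring
      calc |x ⬝ᵥ Z t *ᵥ x| ≤ ∑ p, ∑ q, |x p| * (|Z t p q| * |x q|) := h2
        _ ≤ ∑ p, ∑ q : Fin n, ε * (x p ^ 2 + x q ^ 2) :=
            Finset.sum_le_sum fun p _ => Finset.sum_le_sum fun q _ => h3 p q
        _ = ε * (2 * n * ∑ i, x i ^ 2) := h4
    have hpd : (Xf t).PosDef := by
      refine Matrix.PosDef.of_dotProduct_mulVec_pos hherm fun x hx => ?_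
      have hsumpos : 0 < ∑ i, x i ^ 2 := by
        obtain ⟨i, hi⟩ := Function.ne_iff.mp hx
        have h1 : 0 < x i ^ 2 := (sq_nonneg _).lt_of_ne (Ne.symm (pow_ne_zero 2 hi))
        have h2 := Finset.single_le_sum (f := fun j => x j ^ 2)
          (fun j _ => sq_nonneg _) (Finset.mem_univ i)
        exact lt_of_lt_of_le h1 h2
      have hqsplit : x ⬝ᵥ Xf t *ᵥ x = x ⬝ᵥ X₀ *ᵥ x + x ⬝ᵥ Z t *ᵥ x := by
        simp [hXfdef, Matrix.add_mulVec, dotProduct_add]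
      have hup := hquadZ x
      have hlow := hquad x
      have h5 : ε * (2 * ↑n) ≤ cq / 2 := by
        rw [hεdef, div_mul_eq_mul_div, div_le_div_iff₀ (by positivity) (by norm_num : (0:ℝ) < 2)]
        have hn0 : (0:ℝ) ≤ (n:ℝ) := Nat.cast_nonneg n
        nlinarith [hcq.le]
      have key : ε * (2 * ↑n * ∑ i, x i ^ 2) ≤ cq / 2 * ∑ i, x i ^ 2 := by
        calc ε * (2 * ↑n * ∑ i, x i ^ 2) = (ε * (2 * ↑n)) * ∑ i, x i ^ 2 := by ring
          _ ≤ cq / 2 * ∑ i, x i ^ 2 :=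
            mul_le_mul_of_nonneg_right h5 (Finset.sum_nonneg fun i _ => sq_nonneg _)
      have habs := abs_le.mp hup
      show 0 < dotProduct (star x) (Xf t *ᵥ x)
      rw [star_trivial, hqsplit]
      nlinarith [hlow, habs.1, key, hsumpos, hcq]
    exact ⟨hpd, hfeask⟩
  · have hmono : nhdsWithin (0:ℝ) (Icc 0 (min δ (ε' / 2))) ≤ l :=
      nhdsWithin_mono 0 (Icc_subset_Icc_right (min_le_left _ _))
    have h := (tendsto_const_nhds (x := X₀) (f := nhdsWithin (0:ℝ) (Icc 0 (min δ (ε' / 2))))).add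
      (hZ.mono_left hmono)
    have h2 : Tendsto (fun t : ℝ => X₀ + Z t)
        (nhdsWithin (0:ℝ) (Icc 0 (min δ (ε' / 2)))) (nhds (X₀ + 0)) := h
    rw [add_zero] at h2
    exact h2
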